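/- The Gram matrix of the weighted spectral embedding satisfies Y^T Y = W^{-1/2} L_W^+ W^{-1/2} = (I - \pi e^T)^T L^+ (I - \pi e^T); equivalently, y_i^T y_j = (x_i - \bar{x})^T (x_j - \bar{x}), where \bar{x} = X\pi. Thus the weighted embedding equals the regular embedding shifted so the origin is the weighted center of mass. -/

import Mathlib

open Matrix

/-- `P` is the Moore–Penrose pseudo-inverse of `M`. -/
def IsMoorePenroseInverse {n : ℕ} (M P : Matrix (Fin n) (Fin n) ℝ) : Prop :=
  M * P * M = M ∧ P * M * P = P ∧ (M * P)ᵀ = M * P ∧ (P * M)ᵀ = P * M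

lemma mp_unique {n : ℕ} {M P Q : Matrix (Fin n) (Fin n) ℝ}
    (hP : IsMoorePenroseInverse M P) (hQ : IsMoorePenroseInverse M Q) : P = Q := by
  obtain ⟨hP1, hP2, hP3, hP4⟩ := hP
  obtain ⟨hQ1, hQ2, hQ3, hQ4⟩ := hQ
  have h1 : M * P = M * Q := by
    calc M * P = (M * P)ᵀ := hP3.symm
    _ = Pᵀ * Mᵀ := transpose_mul _ _
    _ = Pᵀ * (M * Q * M)ᵀ := by rw [hQ1]
    _ = Pᵀ * (Mᵀ * (M * Q)ᵀ) := by rw [transpose_mul]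
    _ = Pᵀ * (Mᵀ * (M * Q)) := by rw [hQ3]
    _ = (Pᵀ * Mᵀ) * (M * Q) := by rw [mul_assoc]
    _ = (M * P)ᵀ * (M * Q) := by rw [transpose_mul]
    _ = (M * P) * (M * Q) := by rw [hP3]
    _ = (M * P * M) * Q := by simp only [mul_assoc]
    _ = M * Q := by rw [hP1]
  have h2 : P * M = Q * M := by
    calc P * M = (P * M)ᵀ := hP4.symm
    _ = Mᵀ * Pᵀ := transpose_mul _ _
    _ = (M * Q * M)ᵀ * Pᵀ := by rw [hQ1]
    _ = ((Q * M)ᵀ * Mᵀ) * Pᵀ := by simp only [transpose_mul, mul_assoc]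
    _ = (Q * M) * (Mᵀ * Pᵀ) := by rw [hQ4, mul_assoc]
    _ = (Q * M) * (P * M)ᵀ := by rw [transpose_mul]
    _ = (Q * M) * (P * M) := by rw [hP4]
    _ = Q * (M * P * M) := by rw [mul_assoc, mul_assoc]
    _ = Q * M := by rw [hP1]
  calc P = P * M * P := hP2.symm
  _ = Q * M * P := by rw [h2]
  _ = Q * (M * P) := by rw [mul_assoc]
  _ = Q * (M * Q) := by rw [h1]
  _ = Q * M * Q := by rw [mul_assoc]
  _ = Q := hQ2

lemma mp_transpose {n : ℕ} {M P : Matrix (Fin n) (Fin n) ℝ}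
    (hP : IsMoorePenroseInverse M P) : IsMoorePenroseInverse Mᵀ Pᵀ := by
  obtain ⟨h1, h2, h3, h4⟩ := hP
  refine ⟨?_, ?_, ?_, ?_⟩
  · rw [← transpose_mul, ← transpose_mul, ← mul_assoc, h1]
  · rw [← transpose_mul, ← transpose_mul, ← mul_assoc, h2]
  · rw [← transpose_mul, transpose_transpose, h4, ← h4]
  · rw [← transpose_mul, transpose_transpose, h3, ← h3]

lemma quad_form {n : ℕ} (A : Matrix (Fin n) (Fin n) ℝ) (hA : A.IsSymm) (x : Fin n → ℝ) :
    x ⬝ᵥ ((Matrix.diagonal (A.mulVec 1) - A).mulVec x)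
      = (∑ i, ∑ j, A i j * (x i - x j)^2) / 2 := by
  have hsym : ∀ i j, A j i = A i j := fun i j => hA.apply i j
  have hdot : ∀ (M : Matrix (Fin n) (Fin n) ℝ),
      x ⬝ᵥ (M.mulVec x) = ∑ i, ∑ j, M i j * (x i * x j) := by
    intro M
    simp only [dotProduct, mulVec, Finset.mul_sum]
    exact Finset.sum_congr rfl fun i _ => Finset.sum_congr rfl fun j _ => by ring
  have key : (∑ i, ∑ j, A i j * x j ^ 2) = ∑ i, ∑ j, A i j * x i ^ 2 := by
    rw [Finset.sum_comm]
    exact Finset.sum_congr rfl fun i _ => Finset.sum_congr rfl fun j _ => by rw [hsym]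
  have expand : x ⬝ᵥ ((Matrix.diagonal (A.mulVec 1) - A).mulVec x)
      = (∑ i, ∑ j, A i j * x i ^ 2) - ∑ i, ∑ j, A i j * (x i * x j) := by
    rw [sub_mulVec, dotProduct_sub, hdot A]
    congr 1
    simp only [dotProduct]
    refine Finset.sum_congr rfl fun i _ => ?_
    rw [mulVec_diagonal, mulVec]
    simp only [dotProduct, mul_one]
    rw [Finset.sum_mul, Finset.mul_sum]
    exact Finset.sum_congr rfl fun j _ => by simp only [Pi.one_apply, mul_one]; ring
  have expand2 : (∑ i, ∑ j, A i j * (x i - x j)^2)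
      = (∑ i, ∑ j, A i j * x i ^ 2) - 2 * (∑ i, ∑ j, A i j * (x i * x j))
        + ∑ i, ∑ j, A i j * x j ^ 2 := by
    rw [Finset.mul_sum, ← Finset.sum_sub_distrib, ← Finset.sum_add_distrib]
    refine Finset.sum_congr rfl fun i _ => ?_
    rw [Finset.mul_sum, ← Finset.sum_sub_distrib, ← Finset.sum_add_distrib]
    exact Finset.sum_congr rfl fun j _ => by ring
  rw [expand, expand2, key]
  ring

lemma quad_nonneg {n : ℕ} (A : Matrix (Fin n) (Fin n) ℝ) (hA : A.IsSymm)
    (hnonneg : ∀ i j, 0 ≤ A i j) (x : Fin n → ℝ) :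
    0 ≤ x ⬝ᵥ ((Matrix.diagonal (A.mulVec 1) - A).mulVec x) := by
  rw [quad_form A hA]
  apply div_nonneg _ (by norm_num)
  exact Finset.sum_nonneg fun i _ => Finset.sum_nonneg fun j _ =>
    mul_nonneg (hnonneg i j) (sq_nonneg _)

lemma kernel_const {n : ℕ} (A : Matrix (Fin n) (Fin n) ℝ) (hA : A.IsSymm)
    (hnonneg : ∀ i j, 0 ≤ A i j)
    (hconn : ∀ i j : Fin n, Relation.ReflTransGen (fun a b => 0 < A a b) i j)
    (x : Fin n → ℝ) (hx : (Matrix.diagonal (A.mulVec 1) - A).mulVec x = 0) :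
    ∀ i j : Fin n, x i = x j := by
  have hq : (∑ i, ∑ j, A i j * (x i - x j)^2) = 0 := by
    have h0 : x ⬝ᵥ ((Matrix.diagonal (A.mulVec 1) - A).mulVec x) = 0 := by
      rw [hx]; simp
    rw [quad_form A hA, div_eq_zero_iff] at h0
    rcases h0 with h | h
    · exact h
    · norm_num at h
  have hterm : ∀ i j, A i j * (x i - x j)^2 = 0 := by
    have h1 := (Finset.sum_eq_zero_iff_of_nonneg (fun i _ =>
      Finset.sum_nonneg fun j _ => mul_nonneg (hnonneg i j) (sq_nonneg _))).mp hq
    intro i j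
    have h2 := (Finset.sum_eq_zero_iff_of_nonneg (fun j _ =>
      mul_nonneg (hnonneg i j) (sq_nonneg _))).mp (h1 i (Finset.mem_univ i))
    exact h2 j (Finset.mem_univ j)
  have hrel : ∀ a b : Fin n, 0 < A a b → x a = x b := by
    intro a b hab
    have := hterm a b
    have h3 : (x a - x b)^2 = 0 := by
      rcases mul_eq_zero.mp this with h | h
      · exact absurd h (ne_of_gt hab)
      · exact h
    have := pow_eq_zero_iff (n := 2) (by norm_num) |>.mp h3
    linarith
  intro i j
  induction hconn i j with
  | refl => rfl
  | tail _ hbc ih => exact ih.trans (hrel _ _ hbc)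

lemma vmv_mul_vmv {n : ℕ} (a b c d : Fin n → ℝ) :
    Matrix.vecMulVec a b * Matrix.vecMulVec c d = (b ⬝ᵥ c) • Matrix.vecMulVec a d := by
  ext i j
  simp only [mul_apply, vecMulVec_apply, Matrix.smul_apply, smul_eq_mul, dotProduct,
    Finset.sum_mul, Finset.mul_sum]
  exact Finset.sum_congr rfl fun k _ => by ring

lemma spectral_mp {n : ℕ} (U : Matrix (Fin n) (Fin n) ℝ) (hU : Uᵀ * U = 1)
    (d : Fin n → ℝ) :
    IsMoorePenroseInverse (U * Matrix.diagonal d * Uᵀ)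
      (U * Matrix.diagonal (fun i => (d i)⁻¹) * Uᵀ) := by
  have collapse : ∀ a b : Fin n → ℝ,
      (U * Matrix.diagonal a * Uᵀ) * (U * Matrix.diagonal b * Uᵀ)
        = U * Matrix.diagonal (fun i => a i * b i) * Uᵀ := by
    intro a b
    have : Matrix.diagonal a * (Uᵀ * U) * Matrix.diagonal b = Matrix.diagonal fun i => a i * b i := by
      rw [hU, mul_one, diagonal_mul_diagonal]
    calc (U * Matrix.diagonal a * Uᵀ) * (U * Matrix.diagonal b * Uᵀ)
        = U * (Matrix.diagonal a * (Uᵀ * U) * Matrix.diagonal b) * Uᵀ := by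
          simp only [mul_assoc]
      _ = U * Matrix.diagonal (fun i => a i * b i) * Uᵀ := by rw [this]
  have hsy : ∀ a : Fin n → ℝ, (U * Matrix.diagonal a * Uᵀ)ᵀ = U * Matrix.diagonal a * Uᵀ := by
    intro a
    rw [transpose_mul, transpose_mul, transpose_transpose, diagonal_transpose, mul_assoc]
  refine ⟨?_, ?_, ?_, ?_⟩
  · rw [collapse, collapse]
    congr 1
    funext i
    by_cases h : d i = 0 <;> field_simp [h]
  · rw [collapse, collapse]
    congr 1
    congr 1
    congr 1
    funext i
    by_cases h : d i = 0 <;> field_simp [h]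
  · rw [collapse, hsy]
  · rw [collapse, hsy]

lemma diag_entry {n : ℕ} (M L : Matrix (Fin n) (Fin n) ℝ) (i : Fin n) :
    (Mᵀ * L * M) i i = (fun k => M k i) ⬝ᵥ (L.mulVec (fun k => M k i)) := by
  simp only [mul_apply, transpose_apply, dotProduct, mulVec, Finset.sum_mul, Finset.mul_sum]
  rw [Finset.sum_comm]
  exact Finset.sum_congr rfl fun k _ => Finset.sum_congr rfl fun l _ => by ring

lemma conj_dot {n : ℕ} (c : Fin n → ℝ) (L : Matrix (Fin n) (Fin n) ℝ) (x : Fin n → ℝ) :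
    x ⬝ᵥ ((Matrix.diagonal c * L * Matrix.diagonal c).mulVec x)
      = (fun i => c i * x i) ⬝ᵥ (L.mulVec (fun i => c i * x i)) := by
  have h1 : (Matrix.diagonal c * L * Matrix.diagonal c) *ᵥ x
      = Matrix.diagonal c *ᵥ (L *ᵥ (Matrix.diagonal c *ᵥ x)) := by
    rw [mulVec_mulVec, mulVec_mulVec]
  have h3 : ∀ y : Fin n → ℝ, Matrix.diagonal c *ᵥ y = fun i => c i * y i :=
    fun y => funext (mulVec_diagonal c y)
  rw [h1, h3, h3]
  simp only [dotProduct]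
  exact Finset.sum_congr rfl fun k _ => by ring

lemma proj_ker {n : ℕ} (hn : 0 < n) (L Lp : Matrix (Fin n) (Fin n) ℝ)
    (hLp : IsMoorePenroseInverse L Lp)
    (hker : ∀ x : Fin n → ℝ, L.mulVec x = 0 → ∀ i j, x i = x j)
    (he : L.mulVec (fun _ => (1:ℝ)) = 0) :
    Lp * L = 1 - (n : ℝ)⁻¹ • Matrix.vecMulVec (fun _ => (1:ℝ)) (fun _ => (1:ℝ)) := by
  obtain ⟨h1, h2, h3, h4⟩ := hLp
  set K : Matrix (Fin n) (Fin n) ℝ := 1 - Lp * L with hK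
  have hLK : L * K = 0 := by
    rw [hK, mul_sub, mul_one, ← mul_assoc, h1, sub_self]
  have hcols : ∀ (j i i' : Fin n), K i j = K i' j := by
    intro j i i'
    refine hker (fun k => K k j) ?_ i i'
    funext a
    have : (L * K) a j = 0 := by rw [hLK]; rfl
    rw [mul_apply] at this
    simpa [mulVec, dotProduct] using this
  have hKsymm : ∀ i j, K i j = K j i := by
    intro i j
    have : Kᵀ = K := by rw [hK, transpose_sub, transpose_one, h4]
    conv_lhs => rw [← this]
    rfl
  have hconst : ∀ i j, K i j = K ⟨0, hn⟩ ⟨0, hn⟩ := by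
    intro i j
    rw [hcols j i ⟨0, hn⟩, hKsymm ⟨0, hn⟩ j, hcols ⟨0, hn⟩ j ⟨0, hn⟩]
  have hKe : K.mulVec (fun _ => (1:ℝ)) = (fun _ => (1:ℝ)) := by
    rw [hK, sub_mulVec, one_mulVec, ← mulVec_mulVec, he]
    funext i
    simp
  have hsum : (n : ℝ) * K ⟨0, hn⟩ ⟨0, hn⟩ = 1 := by
    have := congrFun hKe ⟨0, hn⟩
    simp only [mulVec, dotProduct, mul_one] at this
    rw [← this]
    rw [Finset.sum_congr rfl fun j _ => (hconst ⟨0, hn⟩ j)]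
    simp [Finset.sum_const, mul_comm]
  have hKval : ∀ i j, K i j = (n : ℝ)⁻¹ := by
    intro i j
    rw [hconst i j]
    field_simp
    linarith [hsum]
  have : Lp * L = 1 - K := by rw [hK]; abel
  rw [this]
  congr 1
  ext i j
  simp [hKval i j, vecMulVec_apply]

/-- The Gram matrix of the weighted spectral embedding is
`Yᵀ Y = W^{-1/2} L_W⁺ W^{-1/2} = (I - π eᵀ)ᵀ L⁺ (I - π eᵀ)`; equivalently
`yᵢᵀ yⱼ = (xᵢ - x̄)ᵀ (xⱼ - x̄)` with `x̄ = X π`: the weighted embedding is the regular one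
shifted so that the origin is the weighted center of mass. -/
theorem weighted_spectral_embedding_gram
    (n : ℕ) (hn : 0 < n) (A : Matrix (Fin n) (Fin n) ℝ)
    (hsymm : A.IsSymm) (hnonneg : ∀ i j, 0 ≤ A i j) (hdiag : ∀ i, A i i = 0)
    (hconn : ∀ i j : Fin n, Relation.ReflTransGen (fun a b => 0 < A a b) i j)
    (w : Fin n → ℝ) (hw : ∀ i, 0 < w i)
    (π : Fin n → ℝ) (hπ : π = fun i => w i / ∑ k, w k)
    (L : Matrix (Fin n) (Fin n) ℝ)
    (hL : L = Matrix.diagonal (A.mulVec 1) - A)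
    (LW : Matrix (Fin n) (Fin n) ℝ)
    (hLW : LW = Matrix.diagonal (fun i => (Real.sqrt (w i))⁻¹) * L *
      Matrix.diagonal (fun i => (Real.sqrt (w i))⁻¹))
    (Lp : Matrix (Fin n) (Fin n) ℝ) (hLp : IsMoorePenroseInverse L Lp)
    (LWp : Matrix (Fin n) (Fin n) ℝ) (hLWp : IsMoorePenroseInverse LW LWp)
    (U : Matrix (Fin n) (Fin n) ℝ) (hU : Uᵀ * U = 1)
    (lam : Fin n → ℝ) (hdec : L = U * Matrix.diagonal lam * Uᵀ)
    (hlam0 : lam ⟨0, hn⟩ = 0) (hu1 : ∀ i, U i ⟨0, hn⟩ = 1 / Real.sqrt n)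
    (X : Matrix (Fin n) (Fin n) ℝ)
    (hX : X = Matrix.diagonal (fun i => Real.sqrt (lam i)⁻¹) * Uᵀ)
    (Uh : Matrix (Fin n) (Fin n) ℝ) (hUh : Uhᵀ * Uh = 1)
    (mu : Fin n → ℝ) (hdecW : LW = Uh * Matrix.diagonal mu * Uhᵀ)
    (hmu0 : mu ⟨0, hn⟩ = 0) (huh1 : ∀ i, Uh i ⟨0, hn⟩ = Real.sqrt (w i / ∑ k, w k))
    (Y : Matrix (Fin n) (Fin n) ℝ)
    (hY : Y = Matrix.diagonal (fun i => Real.sqrt (mu i)⁻¹) * Uhᵀ *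
      Matrix.diagonal (fun i => (Real.sqrt (w i))⁻¹))
    (xbar : Fin n → ℝ) (hxbar : xbar = X.mulVec π) :
    Yᵀ * Y = Matrix.diagonal (fun i => (Real.sqrt (w i))⁻¹) * LWp *
        Matrix.diagonal (fun i => (Real.sqrt (w i))⁻¹) ∧
    Yᵀ * Y = (1 - Matrix.vecMulVec π (fun _ => (1 : ℝ)))ᵀ * Lp *
        (1 - Matrix.vecMulVec π (fun _ => (1 : ℝ))) ∧
    ∀ i j, (∑ k, Y k i * Y k j) = ∑ k, (X k i - xbar k) * (X k j - xbar k) := by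
  -- notation
  set Si : Matrix (Fin n) (Fin n) ℝ := Matrix.diagonal (fun i => (Real.sqrt (w i))⁻¹) with hSi
  set S : Matrix (Fin n) (Fin n) ℝ := Matrix.diagonal (fun i => Real.sqrt (w i)) with hS
  set V : Matrix (Fin n) (Fin n) ℝ := Matrix.vecMulVec π (fun _ => (1:ℝ)) with hV
  set Q : Matrix (Fin n) (Fin n) ℝ := 1 - V with hQ
  -- basic positivity facts
  have hsw : ∀ i, 0 < Real.sqrt (w i) := fun i => Real.sqrt_pos.2 (hw i)
  have hwsum : 0 < ∑ k, w k := Finset.sum_pos (fun i _ => hw i) ⟨⟨0, hn⟩, Finset.mem_univ _⟩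
  have hπsum : ∑ i, π i = 1 := by
    rw [hπ, ← Finset.sum_div, div_self (ne_of_gt hwsum)]
  have hπs : ∀ k, π k = Real.sqrt (w k) * Real.sqrt (w k) / ∑ m, w m := by
    intro k; rw [hπ, Real.mul_self_sqrt (hw k).le]
  have hSiS : Si * S = 1 := by
    rw [hSi, hS, diagonal_mul_diagonal,
      show (fun i => (Real.sqrt (w i))⁻¹ * Real.sqrt (w i)) = fun _ => (1:ℝ) from
        funext fun i => inv_mul_cancel₀ (ne_of_gt (hsw i)), diagonal_one]
  have hSSi : S * Si = 1 := by
    rw [hSi, hS, diagonal_mul_diagonal,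
      show (fun i => Real.sqrt (w i) * (Real.sqrt (w i))⁻¹) = fun _ => (1:ℝ) from
        funext fun i => mul_inv_cancel₀ (ne_of_gt (hsw i)), diagonal_one]
  -- symmetry of L and row/column sums
  have hLsymm : Lᵀ = L := by
    rw [hL, transpose_sub, diagonal_transpose, hsymm.eq]
  have hLe : L.mulVec (fun _ => (1:ℝ)) = 0 := by
    rw [hL, sub_mulVec]
    funext i
    rw [Pi.sub_apply, mulVec_diagonal]
    simp [mulVec, dotProduct]
  have hrowsum : ∀ i, ∑ k, L i k = 0 := by
    intro i
    have := congrFun hLe i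
    simpa [mulVec, dotProduct] using this
  have hcolsum : ∀ j, ∑ k, L k j = 0 := by
    intro j
    calc ∑ k, L k j = ∑ k, L j k := Finset.sum_congr rfl fun k _ => by
          rw [show L k j = Lᵀ j k from rfl, hLsymm]
      _ = 0 := hrowsum j
  -- Q annihilates L from both sides
  have hVL : V * L = 0 := by
    ext i j
    simp only [hV, mul_apply, vecMulVec_apply, mul_one, Matrix.zero_apply]
    rw [← Finset.mul_sum, hcolsum, mul_zero]
  have hQL : Q * L = L := by rw [hQ, sub_mul, one_mul, hVL, sub_zero]
  have hVt : Vᵀ = Matrix.vecMulVec (fun _ => (1:ℝ)) π := by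
    ext i j
    simp [hV, vecMulVec_apply, mul_comm]
  have hLVt : L * Vᵀ = 0 := by
    rw [hVt]
    ext i j
    simp only [mul_apply, vecMulVec_apply, one_mul, Matrix.zero_apply]
    rw [← Finset.sum_mul, hrowsum, zero_mul]
  have hLQt : L * Qᵀ = L := by
    rw [hQ, transpose_sub, transpose_one, mul_sub, mul_one, hLVt, sub_zero]
  have h1π : (fun _ => (1:ℝ)) ⬝ᵥ π = 1 := by
    simpa [dotProduct] using hπsum
  have hπ1 : π ⬝ᵥ (fun _ => (1:ℝ)) = 1 := by
    simpa [dotProduct] using hπsum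
  have hVV : V * V = V := by
    rw [hV, vmv_mul_vmv, h1π, one_smul]
  have hQQ : Q * Q = Q := by
    have hVQ : V * Q = 0 := by rw [hQ, mul_sub, mul_one, hVV, sub_self]
    rw [hQ, sub_mul, one_mul, hVQ, sub_zero]
  -- the projection Lp * L
  have hkerL : ∀ x : Fin n → ℝ, L.mulVec x = 0 → ∀ i j, x i = x j := by
    intro x hx
    exact kernel_const A hsymm hnonneg hconn x (by rw [← hL]; exact hx)
  have hproj : Lp * L = 1 - (n : ℝ)⁻¹ •
      Matrix.vecMulVec (fun _ => (1:ℝ)) (fun _ => (1:ℝ)) :=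
    proj_ker hn L Lp hLp hkerL hLe
  have hLpt : Lpᵀ = Lp := by
    refine mp_unique ?_ hLp
    have := mp_transpose hLp
    rwa [hLsymm] at this
  have hcomm : L * Lp = Lp * L := by
    calc L * Lp = Lᵀ * Lpᵀ := by rw [hLsymm, hLpt]
      _ = (Lp * L)ᵀ := (transpose_mul _ _).symm
      _ = Lp * L := hLp.2.2.2
  have hJV : Matrix.vecMulVec (fun _ => (1:ℝ)) (fun _ => (1:ℝ)) * V
      = Matrix.vecMulVec (fun _ => (1:ℝ)) (fun _ => (1:ℝ)) := by
    rw [hV, vmv_mul_vmv, h1π, one_smul]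
  have hVtJ : Vᵀ * Matrix.vecMulVec (fun _ => (1:ℝ)) (fun _ => (1:ℝ))
      = Matrix.vecMulVec (fun _ => (1:ℝ)) (fun _ => (1:ℝ)) := by
    rw [hVt, vmv_mul_vmv, hπ1, one_smul]
  have hPQ : (Lp * L) * Q = Q := by
    have hJQ : Matrix.vecMulVec (fun _ => (1:ℝ)) (fun _ => (1:ℝ)) * Q = 0 := by
      rw [hQ, mul_sub, mul_one, hJV, sub_self]
    rw [hproj, sub_mul, one_mul, smul_mul_assoc, hJQ, smul_zero, sub_zero]
  have hQtP : Qᵀ * (Lp * L) = Qᵀ := by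
    have hQtJ : Qᵀ * Matrix.vecMulVec (fun _ => (1:ℝ)) (fun _ => (1:ℝ)) = 0 := by
      rw [hQ, transpose_sub, transpose_one, sub_mul, one_mul, hVtJ, sub_self]
    rw [hproj, mul_sub, mul_one, mul_smul_comm, hQtJ, smul_zero, sub_zero]
  -- the key diagonal-conjugation symmetry
  have hQtSi : S * Qᵀ * Si = Si * Q * S := by
    ext i j
    rw [hQ, hV, hS, hSi, mul_diagonal, diagonal_mul, mul_diagonal, diagonal_mul]
    simp only [transpose_apply, Matrix.sub_apply, one_apply, vecMulVec_apply, mul_one]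
    by_cases h : i = j
    · subst h; ring
    · rw [if_neg h, if_neg (Ne.symm h)]
      rw [hπs i, hπs j]
      have h1 := ne_of_gt (hsw i)
      have h2 := ne_of_gt (hsw j)
      have h3 := ne_of_gt hwsum
      field_simp
      ring
  -- the candidate pseudo-inverse of LW
  set Mx : Matrix (Fin n) (Fin n) ℝ := S * (Qᵀ * Lp * Q) * S with hMx
  set R : Matrix (Fin n) (Fin n) ℝ := Si * Q * S with hR
  have hRsymm : Rᵀ = R := by
    calc Rᵀ = Sᵀ * Qᵀ * Siᵀ := by rw [hR, transpose_mul, transpose_mul, mul_assoc]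
    _ = S * Qᵀ * Si := by rw [hS, hSi, diagonal_transpose, diagonal_transpose]
    _ = R := by rw [hQtSi, hR]
  have hLWM : LW * Mx = R := by
    calc LW * Mx = Si * L * Si * (S * (Qᵀ * Lp * Q) * S) := by rw [hLW, hMx]
    _ = Si * L * (Si * S) * (Qᵀ * Lp * Q) * S := by simp only [mul_assoc]
    _ = Si * L * (Qᵀ * Lp * Q) * S := by rw [hSiS, mul_one]
    _ = Si * (L * Qᵀ) * Lp * Q * S := by simp only [mul_assoc]
    _ = Si * L * Lp * Q * S := by rw [hLQt]
    _ = Si * (L * Lp) * Q * S := by simp only [mul_assoc]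
    _ = Si * ((Lp * L) * Q) * S := by rw [hcomm]; simp only [mul_assoc]
    _ = Si * Q * S := by rw [hPQ]
    _ = R := hR.symm
  have hMLW : Mx * LW = R := by
    calc Mx * LW = S * (Qᵀ * Lp * Q) * S * (Si * L * Si) := by rw [hLW, hMx]
    _ = S * (Qᵀ * Lp * Q) * (S * Si) * L * Si := by simp only [mul_assoc]
    _ = S * (Qᵀ * Lp * Q) * L * Si := by rw [hSSi, mul_one]
    _ = S * (Qᵀ * Lp) * (Q * L) * Si := by simp only [mul_assoc]
    _ = S * (Qᵀ * Lp) * L * Si := by rw [hQL]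
    _ = S * (Qᵀ * (Lp * L)) * Si := by simp only [mul_assoc]
    _ = S * Qᵀ * Si := by rw [hQtP]
    _ = R := hQtSi.trans hR.symm
  have hMP : IsMoorePenroseInverse LW Mx := by
    refine ⟨?_, ?_, ?_, ?_⟩
    · rw [hLWM]
      calc R * LW = Si * Q * (S * Si) * L * Si := by rw [hR, hLW]; simp only [mul_assoc]
      _ = Si * (Q * L) * Si := by rw [hSSi, mul_one]; simp only [mul_assoc]
      _ = Si * L * Si := by rw [hQL]
      _ = LW := hLW.symm
    · rw [mul_assoc, hLWM]
      calc Mx * R = S * (Qᵀ * Lp) * (Q * (S * Si)) * Q * S := by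
            rw [hMx, hR]; simp only [mul_assoc]
      _ = S * (Qᵀ * Lp) * (Q * Q) * S := by rw [hSSi, mul_one]; simp only [mul_assoc]
      _ = S * (Qᵀ * Lp * Q) * S := by rw [hQQ]; simp only [mul_assoc]
      _ = Mx := hMx.symm
    · rw [hLWM, hRsymm]
    · rw [hMLW, hRsymm]
  have hLWp_eq : LWp = Mx := mp_unique hLWp hMP
  -- claim 2 core
  have hclaim2core : Si * LWp * Si = Qᵀ * Lp * Q := by
    rw [hLWp_eq, hMx]
    calc Si * (S * (Qᵀ * Lp * Q) * S) * Si
        = (Si * S) * ((Qᵀ * Lp * Q) * (S * Si)) := by simp only [mul_assoc]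
    _ = Qᵀ * Lp * Q := by rw [hSiS, hSSi, one_mul, mul_one]
  -- nonnegativity of eigenvalues
  have hUU : U * Uᵀ = 1 := mul_eq_one_comm.mp hU
  have hlamdiag : Matrix.diagonal lam = Uᵀ * L * U := by
    rw [hdec]
    calc Matrix.diagonal lam
        = (Uᵀ * U) * Matrix.diagonal lam * (Uᵀ * U) := by rw [hU, one_mul, mul_one]
    _ = Uᵀ * (U * Matrix.diagonal lam * Uᵀ) * U := by simp only [mul_assoc]
  have hlam_nonneg : ∀ i, 0 ≤ lam i := by
    intro i
    have h1 : lam i = (Uᵀ * L * U) i i := by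
      rw [← hlamdiag]; simp [diagonal_apply]
    rw [h1, diag_entry, hL]
    exact quad_nonneg A hsymm hnonneg _
  have hmudiag : Matrix.diagonal mu = Uhᵀ * LW * Uh := by
    rw [hdecW]
    calc Matrix.diagonal mu
        = (Uhᵀ * Uh) * Matrix.diagonal mu * (Uhᵀ * Uh) := by rw [hUh, one_mul, mul_one]
    _ = Uhᵀ * (Uh * Matrix.diagonal mu * Uhᵀ) * Uh := by simp only [mul_assoc]
  have hmu_nonneg : ∀ i, 0 ≤ mu i := by
    intro i
    have h1 : mu i = (Uhᵀ * LW * Uh) i i := by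
      rw [← hmudiag]; simp [diagonal_apply]
    rw [h1, diag_entry, hLW, hSi, conj_dot, hL]
    exact quad_nonneg A hsymm hnonneg _
  -- pseudo-inverses via spectral decompositions
  have hLp_eq : Lp = U * Matrix.diagonal (fun i => (lam i)⁻¹) * Uᵀ := by
    refine mp_unique hLp ?_
    have := spectral_mp U hU lam
    rwa [← hdec] at this
  have hLWp_eq2 : LWp = Uh * Matrix.diagonal (fun i => (mu i)⁻¹) * Uhᵀ := by
    refine mp_unique hLWp ?_
    have := spectral_mp Uh hUh mu
    rwa [← hdecW] at this
  -- diagonal square facts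
  have hDm : Matrix.diagonal (fun i => Real.sqrt (mu i)⁻¹) *
      Matrix.diagonal (fun i => Real.sqrt (mu i)⁻¹)
      = Matrix.diagonal (fun i => (mu i)⁻¹) := by
    rw [diagonal_mul_diagonal]
    exact congrArg Matrix.diagonal (funext fun i => by
      rw [Real.mul_self_sqrt (inv_nonneg.mpr (hmu_nonneg i))])
  have hDx : Matrix.diagonal (fun i => Real.sqrt (lam i)⁻¹) *
      Matrix.diagonal (fun i => Real.sqrt (lam i)⁻¹)
      = Matrix.diagonal (fun i => (lam i)⁻¹) := by
    rw [diagonal_mul_diagonal]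
    exact congrArg Matrix.diagonal (funext fun i => by
      rw [Real.mul_self_sqrt (inv_nonneg.mpr (hlam_nonneg i))])
  -- claim 1
  have hclaim1 : Yᵀ * Y = Si * LWp * Si := by
    rw [hY, hLWp_eq2, hSi]
    simp only [transpose_mul, transpose_transpose, diagonal_transpose, mul_assoc]
    rw [show Matrix.diagonal (fun i => Real.sqrt (mu i)⁻¹) *
        (Matrix.diagonal (fun i => Real.sqrt (mu i)⁻¹) *
          (Uhᵀ * Matrix.diagonal fun i => (Real.sqrt (w i))⁻¹))
        = Matrix.diagonal (fun i => (mu i)⁻¹) *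
          (Uhᵀ * Matrix.diagonal fun i => (Real.sqrt (w i))⁻¹) from by
      rw [← mul_assoc, hDm]]
  have hXtX : Xᵀ * X = Lp := by
    rw [hX, hLp_eq]
    simp only [transpose_mul, transpose_transpose, diagonal_transpose, mul_assoc]
    rw [show Matrix.diagonal (fun i => Real.sqrt (lam i)⁻¹) *
        (Matrix.diagonal (fun i => Real.sqrt (lam i)⁻¹) * Uᵀ)
        = Matrix.diagonal (fun i => (lam i)⁻¹) * Uᵀ from by
      rw [← mul_assoc, hDx]]
  -- assemble
  have hclaim2 : Yᵀ * Y = Qᵀ * Lp * Q := hclaim1.trans hclaim2core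
  refine ⟨hclaim1, hclaim2, ?_⟩
  intro i j
  have hXQ : ∀ (k : Fin n) (a : Fin n), (X * Q) k a = X k a - xbar k := by
    intro k a
    rw [hQ, hV, mul_apply, hxbar]
    have : ∀ m, X k m * (1 - Matrix.vecMulVec π (fun _ => (1:ℝ))) m a
        = (if m = a then X k m else 0) - X k m * π m := by
      intro m
      simp only [Matrix.sub_apply, one_apply, vecMulVec_apply, mul_one, mul_sub]
      by_cases h : m = a <;> simp [h]
    rw [Finset.sum_congr rfl fun m _ => this m, Finset.sum_sub_distrib,
      Finset.sum_ite_eq' Finset.univ a (fun m => X k m)]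
    simp [mulVec, dotProduct]
  have hYent : (∑ k, Y k i * Y k j) = (Yᵀ * Y) i j := by
    rw [mul_apply]
    exact Finset.sum_congr rfl fun k _ => by rw [transpose_apply]
  have hXent : (∑ k, (X k i - xbar k) * (X k j - xbar k)) = ((X * Q)ᵀ * (X * Q)) i j := by
    rw [mul_apply]
    exact Finset.sum_congr rfl fun k _ => by rw [transpose_apply, hXQ, hXQ]
  have hfin : (X * Q)ᵀ * (X * Q) = Qᵀ * Lp * Q := by
    calc (X * Q)ᵀ * (X * Q) = Qᵀ * (Xᵀ * X) * Q := by
          rw [transpose_mul]; simp only [mul_assoc]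
    _ = Qᵀ * Lp * Q := by rw [hXtX]
  rw [hYent, hXent, hfin, ← hclaim2]
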